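/- Let θ be a CPWL function with (z̄,v̄) ∈ gph ∂θ. Then for every u ∈ 𝒦(z̄,v̄) one has (D∂θ)(z̄,v̄)(u) = {w ∈ (D̂*∂θ)(z̄,v̄)(−u) : ⟨w,u⟩ = 0}, and this set coincides with the set of minimizers of w ↦ −⟨w,u⟩ over w ∈ (D̂*∂θ)(z̄,v̄)(−u). -/

import Mathlib

open Filter Topology Set RealInnerProductSpace

noncomputable section

abbrev Ev (k : ℕ) := EuclideanSpace ℝ (Fin k)

/-- The Bouligand–Severi tangent cone to a set `s` at `x`. -/
def tcone {E : Type*} [NormedAddCommGroup E] [NormedSpace ℝ E] (s : Set E) (x : E) : Set E :=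
  {w | ∃ (z : ℕ → E) (c : ℕ → ℝ), (∀ k, z k ∈ s) ∧ (∀ k, 0 ≤ c k) ∧
      Tendsto z atTop (𝓝 x) ∧ Tendsto (fun k => c k • (z k - x)) atTop (𝓝 w)}

/-- The data of a convex piecewise linear (CPWL) extended-real-valued function on `ℝ^m`:
`θ(z) = max_i (⟨a i, z⟩ - al i)` on the polyhedron `dom θ = {z | ⟨d i, z⟩ ≤ be i ∀ i}`,
and `θ(z) = +∞` outside of it. -/
structure CPWL (m : ℕ) where
  l : ℕ
  p : ℕ
  hl : 0 < l
  a : Fin l → Ev m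
  al : Fin l → ℝ
  d : Fin p → Ev m
  be : Fin p → ℝ
  dom_nonempty : ∃ z : Ev m, ∀ i, ⟪d i, z⟫ ≤ be i

namespace CPWL

variable {m : ℕ} (θ : CPWL m)

/-- The (polyhedral) domain of the CPWL function. -/
def dom : Set (Ev m) := {z | ∀ i, ⟪θ.d i, z⟫ ≤ θ.be i}

/-- The real value `max_i (⟨a i, z⟩ - al i)` of the CPWL function (meaningful on its domain). -/
def val (z : Ev m) : ℝ := ⨆ i : Fin θ.l, (⟪θ.a i, z⟫ - θ.al i)

/-- The CPWL function as an extended-real-valued function. -/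
def eval (z : Ev m) : EReal :=
  @ite _ (z ∈ θ.dom) (Classical.propDecidable _) ((θ.val z : ℝ) : EReal) ⊤

/-- The subdifferential (of convex analysis) of the CPWL function. -/
def subdiff (z : Ev m) : Set (Ev m) :=
  {v | z ∈ θ.dom ∧ ∀ z' ∈ θ.dom, ⟪v, z' - z⟫ ≤ θ.val z' - θ.val z}

/-- Active indices `K(z)` of the max-representation. -/
def Kact (z : Ev m) : Set (Fin θ.l) := {i | θ.val z = ⟪θ.a i, z⟫ - θ.al i}

/-- Active indices `I(z)` of the domain constraints. -/
def Iact (z : Ev m) : Set (Fin θ.p) := {i | ⟪θ.d i, z⟫ = θ.be i}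

/-- The critical cone `𝒦(z̄,v̄) = {w ∈ T(z̄; dom θ) : ⟨v̄,w⟩ = θ′(z̄;w)}`. -/
def crit (zb vb : Ev m) : Set (Ev m) :=
  {w | w ∈ tcone θ.dom zb ∧
    Tendsto (fun t : ℝ => (θ.val (zb + t • w) - θ.val zb) / t) (𝓝[>] (0 : ℝ))
      (𝓝 ⟪vb, w⟫)}

/-- The graph of the subdifferential mapping. -/
def gph : Set (Ev m × Ev m) := {zv | zv.2 ∈ θ.subdiff zv.1}

/-- The graphical derivative `(D∂θ)(z̄,v̄)(u)`. -/
def Dsub (zb vb u : Ev m) : Set (Ev m) := {w | (u, w) ∈ tcone θ.gph (zb, vb)}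

/-- The regular coderivative `(D̂*∂θ)(z̄,v̄)(u)`. -/
def Dhat (zb vb u : Ev m) : Set (Ev m) :=
  {w | ∀ h ∈ tcone θ.gph (zb, vb), ⟪w, h.1⟫ - ⟪u, h.2⟫ ≤ 0}

end CPWL

section VarSys

variable {n m : ℕ}

/-- The adjoint `∇Φ(x)*` of the Jacobian of `Φ` at `x`. -/
def adjD (Φ : Ev n → Ev m) (x : Ev n) : Ev m →L[ℝ] Ev n :=
  ContinuousLinearMap.adjoint (fderiv ℝ Φ x)

/-- `Ψ(x,v) = f(x) + ∇Φ(x)* v`. -/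
def Psi (f : Ev n → Ev n) (Φ : Ev n → Ev m) (x : Ev n) (v : Ev m) : Ev n :=
  f x + adjD Φ x v

/-- The partial Jacobian `∇ₓΨ(x̄,v̄)`. -/
def gradxPsi (f : Ev n → Ev n) (Φ : Ev n → Ev m) (xb : Ev n) (vb : Ev m) :
    Ev n →L[ℝ] Ev n :=
  fderiv ℝ (fun x => Psi f Φ x vb) xb

/-- The Lagrange multiplier set `Λ(x̄)` of the variational system. -/
def Lam (f : Ev n → Ev n) (Φ : Ev n → Ev m) (θ : CPWL m) (xb : Ev n) : Set (Ev m) :=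
  {v | Psi f Φ xb v = 0 ∧ v ∈ θ.subdiff (Φ xb)}

/-- `v̄` is a critical multiplier for the variational system. -/
def IsCritical (f : Ev n → Ev n) (Φ : Ev n → Ev m) (θ : CPWL m) (xb : Ev n) (vb : Ev m) :
    Prop :=
  ∃ ξ : Ev n, ξ ≠ 0 ∧ ∃ w ∈ θ.Dsub (Φ xb) vb (fderiv ℝ Φ xb ξ),
    gradxPsi f Φ xb vb ξ + adjD Φ xb w = 0

/-- The solution map of the canonically perturbed variational system. -/
def Smap (f : Ev n → Ev n) (Φ : Ev n → Ev m) (θ : CPWL m) (p₁ : Ev n) (p₂ : Ev m) :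
    Set (Ev n × Ev m) :=
  {xv | Psi f Φ xv.1 xv.2 = p₁ ∧ xv.2 ∈ θ.subdiff (Φ xv.1 + p₂)}

end VarSys

section General

variable {n m : ℕ}

/-- The subdifferential of a general extended-real-valued function. -/
def subdiffE (θ : Ev m → EReal) (z : Ev m) : Set (Ev m) :=
  {v | ∀ z', ((⟪v, z' - z⟫ : ℝ) : EReal) ≤ θ z' - θ z}

/-- The graph of the subdifferential of a general extended-real-valued function. -/
def gphE (θ : Ev m → EReal) : Set (Ev m × Ev m) := {zv | zv.2 ∈ subdiffE θ zv.1}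

/-- The graphical derivative of the subdifferential, general case. -/
def DsubE (θ : Ev m → EReal) (zb vb u : Ev m) : Set (Ev m) :=
  {w | (u, w) ∈ tcone (gphE θ) (zb, vb)}

/-- The Lagrange multiplier set, general case. -/
def LamE (f : Ev n → Ev n) (Φ : Ev n → Ev m) (θ : Ev m → EReal) (xb : Ev n) :
    Set (Ev m) :=
  {v | Psi f Φ xb v = 0 ∧ v ∈ subdiffE θ (Φ xb)}

/-- The solution map of the canonically perturbed variational system, general case. -/
def SmapE (f : Ev n → Ev n) (Φ : Ev n → Ev m) (θ : Ev m → EReal) (p₁ : Ev n)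
    (p₂ : Ev m) : Set (Ev n × Ev m) :=
  {xv | Psi f Φ xv.1 xv.2 = p₁ ∧ xv.2 ∈ subdiffE θ (Φ xv.1 + p₂)}

end General

section Composite

variable {n m : ℕ}

/-- The gradient `∇ₓL(·,v)` of the Lagrangian `L(x,v) = φ₀(x) + ⟨Φ(x),v⟩`. -/
def gradL (φ₀ : Ev n → ℝ) (Φ : Ev n → Ev m) (v : Ev m) (x : Ev n) : Ev n :=
  gradient (fun y => φ₀ y + ⟪Φ y, v⟫) x

/-- The Hessian `∇²ₓₓL(x̄,v)` as a linear operator. -/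
def HessOp (φ₀ : Ev n → ℝ) (Φ : Ev n → Ev m) (v : Ev m) (xb : Ev n) : Ev n →L[ℝ] Ev n :=
  fderiv ℝ (gradL φ₀ Φ v) xb

/-- The Lagrange multiplier set `Λ_com(x̄)` of the composite optimization problem. -/
def LamCom (φ₀ : Ev n → ℝ) (Φ : Ev n → Ev m) (θ : CPWL m) (xb : Ev n) : Set (Ev m) :=
  {v | gradient φ₀ xb + adjD Φ xb v = 0 ∧ v ∈ θ.subdiff (Φ xb)}

/-- Criticality of a multiplier in the composite optimization setting. -/
def IsCriticalCom (φ₀ : Ev n → ℝ) (Φ : Ev n → Ev m) (θ : CPWL m) (xb : Ev n) (v : Ev m) :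
    Prop :=
  ∃ ξ : Ev n, ξ ≠ 0 ∧ ∃ w ∈ θ.Dsub (Φ xb) v (fderiv ℝ Φ xb ξ),
    HessOp φ₀ Φ v xb ξ + adjD Φ xb w = 0

/-- The solution map of the canonically perturbed KKT system of composite optimization. -/
def SKKT (φ₀ : Ev n → ℝ) (Φ : Ev n → Ev m) (θ : CPWL m) (p₁ : Ev n) (p₂ : Ev m) :
    Set (Ev n × Ev m) :=
  {xv | gradient φ₀ xv.1 + adjD Φ xv.1 xv.2 = p₁ ∧ xv.2 ∈ θ.subdiff (Φ xv.1 + p₂)}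

/-- `x̄` is a local minimizer of `φ₀ + θ∘Φ`. -/
def LocalMin (φ₀ : Ev n → ℝ) (Φ : Ev n → Ev m) (θ : CPWL m) (xb : Ev n) : Prop :=
  ∃ U ∈ 𝓝 xb, ∀ x ∈ U,
    ((φ₀ xb : ℝ) : EReal) + θ.eval (Φ xb) ≤ ((φ₀ x : ℝ) : EReal) + θ.eval (Φ x)

end Composite

section Calmness

variable {n m : ℕ}

/-- Isolated calmness of a solution map at `((0,0), q0)`. -/
def IsolCalm (S : Ev n × Ev m → Set (Ev n × Ev m)) (q0 : Ev n × Ev m) : Prop :=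
  ∃ c : ℝ, 0 ≤ c ∧ ∃ U ∈ 𝓝 (0 : Ev n × Ev m), ∃ V ∈ 𝓝 q0,
    ∀ p ∈ U, ∀ q ∈ S p ∩ V, ‖q - q0‖ ≤ c * (‖p.1‖ + ‖p.2‖)

/-- Robust isolated calmness of a solution map at `((0,0), q0)`. -/
def RobustIsolCalm (S : Ev n × Ev m → Set (Ev n × Ev m)) (q0 : Ev n × Ev m) : Prop :=
  ∃ c : ℝ, 0 ≤ c ∧ ∃ U ∈ 𝓝 (0 : Ev n × Ev m), ∃ V ∈ 𝓝 q0,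
    (∀ p ∈ U, ∀ q ∈ S p ∩ V, ‖q - q0‖ ≤ c * (‖p.1‖ + ‖p.2‖)) ∧
    (∀ p ∈ U, (S p ∩ V).Nonempty)

/-- The Lipschitz-like (Aubin) property of a solution map around `((0,0), q0)`. -/
def LipschitzLike (S : Ev n × Ev m → Set (Ev n × Ev m)) (q0 : Ev n × Ev m) : Prop :=
  ∃ c : ℝ, 0 ≤ c ∧ ∃ U ∈ 𝓝 (0 : Ev n × Ev m), ∃ V ∈ 𝓝 q0,
    ∀ p ∈ U, ∀ p' ∈ U, ∀ q ∈ S p ∩ V, ∃ q' ∈ S p', ‖q - q'‖ ≤ c * ‖p - p'‖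

end Calmness

namespace Stmt4Aux

variable {m : ℕ}

def fcone (S : Finset (Ev m)) : Set (Ev m) :=
  {x | ∃ lam : Ev m → ℝ, (∀ g, 0 ≤ lam g) ∧ x = ∑ g ∈ S, lam g • g}

lemma fcone_zero_mem (S : Finset (Ev m)) : (0 : Ev m) ∈ fcone S :=
  ⟨0, fun _ => le_rfl, by simp⟩

lemma fcone_mono {A S : Finset (Ev m)} (h : A ⊆ S) : fcone A ⊆ fcone S := by
  rintro x ⟨lam, hlam, rfl⟩
  classical
  refine ⟨fun g => if g ∈ A then lam g else 0, fun g => by by_cases h : g ∈ A <;> simp [h, hlam g], ?_⟩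
  rw [← Finset.sum_subset h (fun g _ hg => by simp [hg])]
  exact Finset.sum_congr rfl fun g hg => by simp [hg]

lemma fcone_combo {S : Finset (Ev m)} {x y : Ev m} (hx : x ∈ fcone S) (hy : y ∈ fcone S)
    {a b : ℝ} (ha : 0 ≤ a) (hb : 0 ≤ b) : a • x + b • y ∈ fcone S := by
  obtain ⟨l1, hl1, rfl⟩ := hx
  obtain ⟨l2, hl2, rfl⟩ := hy
  refine ⟨fun g => a * l1 g + b * l2 g, fun g => add_nonneg (mul_nonneg ha (hl1 g)) (mul_nonneg hb (hl2 g)), ?_⟩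
  rw [Finset.smul_sum, Finset.smul_sum, ← Finset.sum_add_distrib]
  exact Finset.sum_congr rfl fun g _ => by rw [add_smul, smul_smul, smul_smul]

lemma fcone_convex (S : Finset (Ev m)) : Convex ℝ (fcone S) :=
  fun _ hx _ hy _ _ ha hb _ => fcone_combo hx hy ha hb

lemma fcone_smul_mem {S : Finset (Ev m)} {x : Ev m} (hx : x ∈ fcone S) {c : ℝ} (hc : 0 ≤ c) :
    c • x ∈ fcone S := by
  simpa using fcone_combo hx (fcone_zero_mem S) hc le_rfl

lemma single_mem_fcone {S : Finset (Ev m)} {g : Ev m} (hg : g ∈ S) {c : ℝ} (hc : 0 ≤ c) :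
    c • g ∈ fcone S := by
  classical
  refine ⟨fun v => if v = g then c else 0, fun v => by by_cases h : v = g <;> simp [h, hc], ?_⟩
  have : ∀ v ∈ S, (if v = g then c else 0) • v = if v = g then c • g else 0 := by
    intro v _; split <;> simp_all
  rw [Finset.sum_congr rfl this, Finset.sum_ite_eq' S g (fun _ => c • g)]
  simp [hg]


lemma fcone_carath (S : Finset (Ev m)) :
    ∀ x ∈ fcone S, ∃ A : Finset (Ev m), A ⊆ S ∧
      LinearIndependent ℝ (fun i : ↥A => (i : Ev m)) ∧ x ∈ fcone A := by
  classical
  induction S using Finset.strongInduction with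
  | _ S ih =>
    intro x hx
    by_cases hind : LinearIndependent ℝ (fun i : ↥S => (i : Ev m))
    · exact ⟨S, le_rfl, hind, hx⟩
    · obtain ⟨g, hg0, i0, hi0⟩ := Fintype.not_linearIndependent_iff.mp hind
      -- get a coefficient vector with a positive entry
      obtain ⟨mu, hmu0, imu, himu⟩ :
          ∃ mu : ↥S → ℝ, ∑ i, mu i • (i : Ev m) = 0 ∧ ∃ i, 0 < mu i := by
        rcases hi0.lt_or_gt with h | h
        · exact ⟨-g, by simpa using congrArg Neg.neg hg0, i0, by simpa using h⟩
        · exact ⟨g, hg0, i0, h⟩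
      obtain ⟨lam, hlam, rfl⟩ := hx
      set T : Finset ↥S := Finset.univ.filter (fun i => 0 < mu i) with hT
      have hTne : T.Nonempty := ⟨imu, by simp [hT, himu]⟩
      obtain ⟨istar, histar, hmin⟩ := T.exists_min_image (fun i => lam i / mu i) hTne
      have hmustar : 0 < mu istar := by simpa [hT] using (Finset.mem_filter.mp histar).2
      set t : ℝ := lam istar / mu istar with ht
      have htnn : 0 ≤ t := div_nonneg (hlam _) hmustar.le
      -- new coefficients
      set lam' : Ev m → ℝ := fun v => if hv : v ∈ S then lam v - t * mu ⟨v, hv⟩ else 0 with hlam'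
      have hlam'nn : ∀ v, 0 ≤ lam' v := by
        intro v
        rw [hlam']
        dsimp only
        split
        · rename_i hv
          rcases le_or_gt (mu ⟨v, hv⟩) 0 with hle | hpos
          · have : t * mu ⟨v, hv⟩ ≤ 0 := mul_nonpos_of_nonneg_of_nonpos htnn hle
            linarith [hlam v]
          · have hmem : (⟨v, hv⟩ : ↥S) ∈ T := by simp [hT, hpos]
            have h2 := hmin _ hmem
            have h3 : t * mu ⟨v, hv⟩ ≤ lam v := by
              have h4 := (div_le_div_iff₀ hmustar hpos).mp h2
              rw [ht, div_mul_eq_mul_div, div_le_iff₀ hmustar]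
              exact h4
            linarith
        · exact le_rfl
      have hsum : ∑ v ∈ S, lam' v • v = ∑ v ∈ S, lam v • v := by
        have hmu_sum : ∑ v : ↥S, (t * mu v) • (v : Ev m) = 0 := by
          calc ∑ v : ↥S, (t * mu v) • (v : Ev m)
              = t • ∑ v : ↥S, mu v • (v : Ev m) := by
                rw [Finset.smul_sum]
                exact Finset.sum_congr rfl fun v _ => (mul_smul t (mu v) (v : Ev m))
            _ = 0 := by rw [hmu0, smul_zero]
        calc ∑ v ∈ S, lam' v • v
            = ∑ v : ↥S, lam' (v : Ev m) • (v : Ev m) :=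
              (Finset.sum_coe_sort S (fun v => lam' v • v)).symm
          _ = ∑ v : ↥S, (lam (v : Ev m) • (v : Ev m) - (t * mu v) • (v : Ev m)) := by
              refine Finset.sum_congr rfl fun v _ => ?_
              rw [hlam']
              simp only [v.2, dif_pos, sub_smul]
          _ = ∑ v : ↥S, lam (v : Ev m) • (v : Ev m) := by
              rw [Finset.sum_sub_distrib, hmu_sum, sub_zero]
          _ = ∑ v ∈ S, lam v • v := Finset.sum_coe_sort S (fun v => lam v • v)
      have hstar0 : lam' (istar : Ev m) = 0 := by
        rw [hlam']
        simp only [istar.2, dif_pos]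
        rw [ht]
        field_simp
        ring
      have hxS' : (∑ v ∈ S, lam v • v) ∈ fcone (S.erase (istar : Ev m)) := by
        refine ⟨lam', hlam'nn, ?_⟩
        rw [← hsum]
        rw [Finset.sum_erase S (by rw [hstar0, zero_smul])]
      obtain ⟨A, hAsub, hAind, hAmem⟩ :=
        ih (S.erase (istar : Ev m)) (Finset.erase_ssubset istar.2) _ hxS'
      exact ⟨A, hAsub.trans (Finset.erase_subset _ _), hAind, hAmem⟩


lemma fcone_indep_isClosed (A : Finset (Ev m))
    (h : LinearIndependent ℝ (fun i : ↥A => (i : Ev m))) : IsClosed (fcone A) := by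
  classical
  let L : (↥A → ℝ) →ₗ[ℝ] Ev m :=
    { toFun := fun f => ∑ i : ↥A, f i • (i : Ev m)
      map_add' := by
        intro f g
        rw [← Finset.sum_add_distrib]
        exact Finset.sum_congr rfl fun i _ => add_smul (f i) (g i) _
      map_smul' := by
        intro c f
        dsimp only [RingHom.id_apply]
        rw [Finset.smul_sum]
        exact Finset.sum_congr rfl fun i _ => mul_smul c (f i) _ }
  have hker : LinearMap.ker L = ⊥ := by
    rw [LinearMap.ker_eq_bot']
    intro f hf
    exact funext (Fintype.linearIndependent_iff.mp h f hf)
  have hemb := LinearMap.isClosedEmbedding_of_injective (f := L) hker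
  have horth : IsClosed {f : ↥A → ℝ | ∀ i, 0 ≤ f i} := by
    have : {f : ↥A → ℝ | ∀ i, 0 ≤ f i} = ⋂ i, {f : ↥A → ℝ | 0 ≤ f i} := by
      ext f; simp
    rw [this]
    exact isClosed_iInter fun i => isClosed_le continuous_const (continuous_apply i)
  have himg : fcone A = L '' {f : ↥A → ℝ | ∀ i, 0 ≤ f i} := by
    ext x
    constructor
    · rintro ⟨lam, hlam, rfl⟩
      refine ⟨fun i => lam i, fun i => hlam _, ?_⟩
      exact (Finset.sum_coe_sort A (fun v => lam v • v))
    · rintro ⟨f, hf, rfl⟩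
      refine ⟨fun v => if hv : v ∈ A then f ⟨v, hv⟩ else 0,
        fun v => by by_cases hv : v ∈ A <;> simp [hv, hf _], ?_⟩
      show L f = _
      rw [← Finset.sum_coe_sort A (fun v => (if hv : v ∈ A then f ⟨v, hv⟩ else 0) • v)]
      exact Finset.sum_congr rfl fun i _ => by simp [i.2]
  rw [himg]
  exact hemb.isClosedMap _ horth

lemma fcone_isClosed (S : Finset (Ev m)) : IsClosed (fcone S) := by
  classical
  have : fcone S = ⋃ A ∈ {A : Finset (Ev m) | A ⊆ S ∧
      LinearIndependent ℝ (fun i : ↥A => (i : Ev m))}, fcone A := by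
    ext x
    simp only [Set.mem_iUnion, Set.mem_setOf_eq]
    constructor
    · intro hx
      obtain ⟨A, hAS, hAind, hAmem⟩ := fcone_carath S x hx
      exact ⟨A, ⟨hAS, hAind⟩, hAmem⟩
    · rintro ⟨A, ⟨hAS, _⟩, hAmem⟩
      exact fcone_mono hAS hAmem
  rw [this]
  refine Set.Finite.isClosed_biUnion ?_ fun A hA => fcone_indep_isClosed A hA.2
  exact Set.Finite.subset (S.powerset : Finset (Finset (Ev m))).finite_toSet
    (fun A hA => by simpa using hA.1)

lemma farkas (S : Finset (Ev m)) (w : Ev m)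
    (hw : ∀ x : Ev m, (∀ g ∈ S, ⟪g, x⟫ ≤ 0) → ⟪w, x⟫ ≤ 0) : w ∈ fcone S := by
  by_contra hmem
  obtain ⟨f, c, hfs, hcw⟩ :=
    geometric_hahn_banach_closed_point (fcone_convex S) (fcone_isClosed S) hmem
  have hc0 : 0 < c := by simpa using hfs 0 (fcone_zero_mem S)
  have hfg : ∀ g ∈ S, f g ≤ 0 := by
    intro g hg
    by_contra hpos
    push_neg at hpos
    have hr : 0 ≤ (c + 1) / f g := div_nonneg (by linarith) hpos.le
    have := hfs _ (single_mem_fcone hg hr)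
    rw [map_smul] at this
    simp only [smul_eq_mul] at this
    rw [div_mul_cancel₀ _ hpos.ne'] at this
    linarith
  set x₀ : Ev m := (InnerProductSpace.toDual ℝ (Ev m)).symm f with hx₀
  have hx₀app : ∀ y : Ev m, ⟪x₀, y⟫ = f y := fun y => InnerProductSpace.toDual_symm_apply
  have h1 : ⟪w, x₀⟫ ≤ 0 := by
    refine hw x₀ fun g hg => ?_
    rw [real_inner_comm, hx₀app g]
    exact hfg g hg
  rw [real_inner_comm, hx₀app w] at h1
  linarith

end Stmt4Aux
namespace Stmt4Aux

open CPWL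

variable {m : ℕ}

lemma val_def (θ : CPWL m) (z : Ev m) :
    θ.val z = ⨆ i : Fin θ.l, (⟪θ.a i, z⟫ - θ.al i) := rfl

lemma le_val (θ : CPWL m) (z : Ev m) (i : Fin θ.l) : ⟪θ.a i, z⟫ - θ.al i ≤ θ.val z := by
  haveI : Nonempty (Fin θ.l) := ⟨⟨0, θ.hl⟩⟩
  rw [val_def]
  exact le_ciSup (Set.Finite.bddAbove (Set.finite_range (fun i : Fin θ.l => ⟪θ.a i, z⟫ - θ.al i))) i

lemma val_le (θ : CPWL m) (z : Ev m) (r : ℝ) (h : ∀ i, ⟪θ.a i, z⟫ - θ.al i ≤ r) :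
    θ.val z ≤ r := by
  haveI : Nonempty (Fin θ.l) := ⟨⟨0, θ.hl⟩⟩
  rw [val_def]
  exact ciSup_le h

lemma exists_attain (θ : CPWL m) (z : Ev m) : ∃ i, θ.val z = ⟪θ.a i, z⟫ - θ.al i := by
  haveI : Nonempty (Fin θ.l) := ⟨⟨0, θ.hl⟩⟩
  obtain ⟨i, -, hmax⟩ := Finset.exists_max_image Finset.univ
    (fun i => ⟪θ.a i, z⟫ - θ.al i) Finset.univ_nonempty
  exact ⟨i, le_antisymm (val_le θ z _ (fun j => hmax j (Finset.mem_univ j))) (le_val θ z i)⟩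

lemma finmin {ι : Type*} [Finite ι] (τ : ι → ℝ) (hτ : ∀ i, 0 < τ i) :
    ∃ t₀, 0 < t₀ ∧ ∀ i, t₀ ≤ τ i := by
  cases isEmpty_or_nonempty ι
  · exact ⟨1, one_pos, fun i => (IsEmpty.false i).elim⟩
  · haveI := Fintype.ofFinite ι
    obtain ⟨i₀, -, hmin⟩ := Finset.exists_min_image Finset.univ τ Finset.univ_nonempty
    exact ⟨τ i₀, hτ i₀, fun i => hmin i (Finset.mem_univ i)⟩

lemma inner_expand (θ : CPWL m) (i : Fin θ.l) (zb x : Ev m) (t : ℝ) :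
    ⟪θ.a i, zb + t • x⟫ - θ.al i = (⟪θ.a i, zb⟫ - θ.al i) + t * ⟪θ.a i, x⟫ := by
  rw [inner_add_right, real_inner_smul_right]; ring

/-- L1: linearization of `val` along a ray from `zb`. -/
lemma ray (θ : CPWL m) (zb x : Ev m) :
    ∃ i₀ : Fin θ.l, θ.val zb = ⟪θ.a i₀, zb⟫ - θ.al i₀ ∧
      (∀ i, θ.val zb = ⟪θ.a i, zb⟫ - θ.al i → ⟪θ.a i, x⟫ ≤ ⟪θ.a i₀, x⟫) ∧
      ∃ t₀ : ℝ, 0 < t₀ ∧ ∀ t : ℝ, 0 ≤ t → t ≤ t₀ →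
        θ.val (zb + t • x) = θ.val zb + t * ⟪θ.a i₀, x⟫ := by
  classical
  obtain ⟨iat, hiat⟩ := exists_attain θ zb
  set s : Finset (Fin θ.l) :=
    Finset.univ.filter (fun i => θ.val zb = ⟪θ.a i, zb⟫ - θ.al i) with hs
  have hsne : s.Nonempty := ⟨iat, by simp [hs, hiat]⟩
  obtain ⟨i₀, hi₀s, hi₀max⟩ := Finset.exists_max_image s (fun i => ⟪θ.a i, x⟫) hsne
  have hi₀act : θ.val zb = ⟪θ.a i₀, zb⟫ - θ.al i₀ := by
    simpa [hs] using (Finset.mem_filter.mp hi₀s).2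
  set τ : Fin θ.l → ℝ := fun i =>
    if θ.val zb = ⟪θ.a i, zb⟫ - θ.al i then 1
    else (θ.val zb - (⟪θ.a i, zb⟫ - θ.al i)) / (1 + |⟪θ.a i, x⟫ - ⟪θ.a i₀, x⟫|) with hτdef
  have hτpos : ∀ i, 0 < τ i := by
    intro i
    rw [hτdef]
    dsimp only
    split
    · exact one_pos
    · rename_i h
      have h1 : ⟪θ.a i, zb⟫ - θ.al i < θ.val zb := lt_of_le_of_ne (le_val θ zb i) (Ne.symm h)
      have h2 : (0:ℝ) < 1 + |⟪θ.a i, x⟫ - ⟪θ.a i₀, x⟫| := by positivity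
      exact div_pos (by linarith) h2
  obtain ⟨t₀, ht₀pos, ht₀le⟩ := finmin τ hτpos
  refine ⟨i₀, hi₀act, ?_, t₀, ht₀pos, ?_⟩
  · intro i hi
    exact hi₀max i (by simp [hs, hi])
  · intro t ht0 htle
    apply le_antisymm
    · apply val_le
      intro i
      rw [inner_expand]
      by_cases hact : θ.val zb = ⟪θ.a i, zb⟫ - θ.al i
      · have := hi₀max i (by simp [hs, hact])
        have := mul_le_mul_of_nonneg_left this ht0
        linarith [hact]
      · have hti : t ≤ τ i := le_trans htle (ht₀le i)
        have hτi : τ i = (θ.val zb - (⟪θ.a i, zb⟫ - θ.al i)) / (1 + |⟪θ.a i, x⟫ - ⟪θ.a i₀, x⟫|) := by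
          rw [hτdef]; simp only [hact, if_false]
        have hden : (0:ℝ) < 1 + |⟪θ.a i, x⟫ - ⟪θ.a i₀, x⟫| := by positivity
        have h3 : t * (1 + |⟪θ.a i, x⟫ - ⟪θ.a i₀, x⟫|) ≤ θ.val zb - (⟪θ.a i, zb⟫ - θ.al i) := by
          rw [hτi] at hti
          calc t * (1 + |⟪θ.a i, x⟫ - ⟪θ.a i₀, x⟫|)
              ≤ ((θ.val zb - (⟪θ.a i, zb⟫ - θ.al i)) / (1 + |⟪θ.a i, x⟫ - ⟪θ.a i₀, x⟫|))
                * (1 + |⟪θ.a i, x⟫ - ⟪θ.a i₀, x⟫|) :=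
                mul_le_mul_of_nonneg_right hti hden.le
            _ = θ.val zb - (⟪θ.a i, zb⟫ - θ.al i) := div_mul_cancel₀ _ hden.ne'
        have h4 : t * (⟪θ.a i, x⟫ - ⟪θ.a i₀, x⟫) ≤ t * (1 + |⟪θ.a i, x⟫ - ⟪θ.a i₀, x⟫|) := by
          apply mul_le_mul_of_nonneg_left _ ht0
          have := le_abs_self (⟪θ.a i, x⟫ - ⟪θ.a i₀, x⟫)
          linarith
        nlinarith
    · have h5 : θ.val zb + t * ⟪θ.a i₀, x⟫ = ⟪θ.a i₀, zb + t • x⟫ - θ.al i₀ := by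
        rw [inner_expand]; linarith
      rw [h5]
      exact le_val θ _ i₀

/-- L2: staying in the domain along a ray. -/
lemma dom_ray (θ : CPWL m) (zb : Ev m) (hzb : zb ∈ θ.dom) (x : Ev m)
    (hx : ∀ j, ⟪θ.d j, zb⟫ = θ.be j → ⟪θ.d j, x⟫ ≤ 0) :
    ∃ t₁ : ℝ, 0 < t₁ ∧ ∀ t : ℝ, 0 ≤ t → t ≤ t₁ → zb + t • x ∈ θ.dom := by
  classical
  set τ : Fin θ.p → ℝ := fun j =>
    if ⟪θ.d j, zb⟫ = θ.be j then 1
    else (θ.be j - ⟪θ.d j, zb⟫) / (1 + |⟪θ.d j, x⟫|) with hτdef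
  have hτpos : ∀ j, 0 < τ j := by
    intro j
    rw [hτdef]
    dsimp only
    split
    · exact one_pos
    · rename_i h
      have h1 : ⟪θ.d j, zb⟫ < θ.be j := lt_of_le_of_ne (hzb j) h
      have h2 : (0:ℝ) < 1 + |⟪θ.d j, x⟫| := by positivity
      exact div_pos (by linarith) h2
  obtain ⟨t₁, ht₁pos, ht₁le⟩ := finmin τ hτpos
  refine ⟨t₁, ht₁pos, fun t ht0 htle j => ?_⟩
  rw [inner_add_right, real_inner_smul_right]
  by_cases hact : ⟪θ.d j, zb⟫ = θ.be j
  · have := mul_le_mul_of_nonneg_left (hx j hact) ht0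
    simp only [mul_zero] at this
    linarith
  · have hti : t ≤ τ j := le_trans htle (ht₁le j)
    have hτj : τ j = (θ.be j - ⟪θ.d j, zb⟫) / (1 + |⟪θ.d j, x⟫|) := by
      rw [hτdef]; simp only [hact, if_false]
    have hden : (0:ℝ) < 1 + |⟪θ.d j, x⟫| := by positivity
    have h3 : t * (1 + |⟪θ.d j, x⟫|) ≤ θ.be j - ⟪θ.d j, zb⟫ := by
      rw [hτj] at hti
      calc t * (1 + |⟪θ.d j, x⟫|)
          ≤ ((θ.be j - ⟪θ.d j, zb⟫) / (1 + |⟪θ.d j, x⟫|)) * (1 + |⟪θ.d j, x⟫|) :=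
            mul_le_mul_of_nonneg_right hti hden.le
        _ = θ.be j - ⟪θ.d j, zb⟫ := div_mul_cancel₀ _ hden.ne'
    have h4 : t * ⟪θ.d j, x⟫ ≤ t * (1 + |⟪θ.d j, x⟫|) := by
      apply mul_le_mul_of_nonneg_left _ ht0
      have := le_abs_self (⟪θ.d j, x⟫); linarith
    linarith

end Stmt4Aux
namespace Stmt4Aux

variable {m : ℕ}

/-- The polyhedral description of the critical cone. -/
def Ccone (θ : CPWL m) (zb vb : Ev m) : Set (Ev m) :=
  {x | (∀ j, ⟪θ.d j, zb⟫ = θ.be j → ⟪θ.d j, x⟫ ≤ 0) ∧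
       (∀ i, θ.val zb = ⟪θ.a i, zb⟫ - θ.al i → ⟪θ.a i, x⟫ ≤ ⟪vb, x⟫)}

lemma zero_mem_Ccone (θ : CPWL m) (zb vb : Ev m) : (0 : Ev m) ∈ Ccone θ zb vb :=
  ⟨fun j _ => by simp, fun i _ => by simp⟩

lemma smul_mem_Ccone (θ : CPWL m) (zb vb : Ev m) {x : Ev m} (hx : x ∈ Ccone θ zb vb)
    {c : ℝ} (hc : 0 ≤ c) : c • x ∈ Ccone θ zb vb := by
  refine ⟨fun j hj => ?_, fun i hi => ?_⟩
  · rw [real_inner_smul_right]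
    exact mul_nonpos_iff.mpr (Or.inl ⟨hc, hx.1 j hj⟩)
  · rw [real_inner_smul_right, real_inner_smul_right]
    exact mul_le_mul_of_nonneg_left (hx.2 i hi) hc

/-- Along rays in the critical cone, `θ` stays in the domain and is exactly linear
with slope `⟪vb, x⟫`. -/
lemma ray_crit (θ : CPWL m) (zb vb : Ev m) (hzv : vb ∈ θ.subdiff zb) (x : Ev m)
    (hx : x ∈ Ccone θ zb vb) :
    ∃ t₀ : ℝ, 0 < t₀ ∧ ∀ t : ℝ, 0 ≤ t → t ≤ t₀ →
      (zb + t • x ∈ θ.dom ∧ θ.val (zb + t • x) = θ.val zb + t * ⟪vb, x⟫) := by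
  obtain ⟨i₀, hact, hmax, ta, htapos, hta⟩ := ray θ zb x
  obtain ⟨tb, htbpos, htb⟩ := dom_ray θ zb hzv.1 x hx.1
  have hle : ⟪θ.a i₀, x⟫ ≤ ⟪vb, x⟫ := hx.2 i₀ hact
  have hge : ⟪vb, x⟫ ≤ ⟪θ.a i₀, x⟫ := by
    set t := min ta tb with ht
    have htpos : 0 < t := lt_min htapos htbpos
    have hdom : zb + t • x ∈ θ.dom := htb t htpos.le (min_le_right _ _)
    have h1 := hzv.2 _ hdom
    rw [add_sub_cancel_left, real_inner_smul_right,
      hta t htpos.le (min_le_left _ _)] at h1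
    exact (mul_le_mul_iff_right₀ htpos).mp (by linarith)
  have heq : ⟪θ.a i₀, x⟫ = ⟪vb, x⟫ := le_antisymm hle hge
  refine ⟨min ta tb, lt_min htapos htbpos, fun t ht0 htle =>
    ⟨htb t ht0 (le_trans htle (min_le_right _ _)), ?_⟩⟩
  rw [hta t ht0 (le_trans htle (min_le_left _ _)), heq]

lemma tcone_dom_d (θ : CPWL m) {zb u : Ev m} (hu : u ∈ tcone θ.dom zb) :
    ∀ j, ⟪θ.d j, zb⟫ = θ.be j → ⟪θ.d j, u⟫ ≤ 0 := by
  obtain ⟨z, c, hz, hc, hzlim, hclim⟩ := hu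
  intro j hj
  have hlim : Tendsto (fun k => ⟪θ.d j, c k • (z k - zb)⟫) atTop (𝓝 ⟪θ.d j, u⟫) :=
    tendsto_const_nhds.inner hclim
  refine le_of_tendsto hlim (Eventually.of_forall fun k => ?_)
  rw [real_inner_smul_right, inner_sub_right]
  have h1 : ⟪θ.d j, z k⟫ - ⟪θ.d j, zb⟫ ≤ 0 := by rw [hj]; linarith [hz k j]
  nlinarith [hc k]

lemma ratio_tendsto (t₀ : ℝ) (ht₀ : 0 < t₀) :
    Tendsto (fun k : ℕ => t₀ / ((k : ℝ) + 1)) atTop (𝓝 0) := by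
  have h := tendsto_one_div_add_atTop_nhds_zero_nat.const_mul t₀
  rw [mul_zero] at h
  refine h.congr fun k => ?_
  rw [one_div, div_eq_mul_inv]

lemma ratio_pos (t₀ : ℝ) (ht₀ : 0 < t₀) (k : ℕ) : 0 < t₀ / ((k : ℝ) + 1) := by positivity

lemma ratio_le (t₀ : ℝ) (ht₀ : 0 < t₀) (k : ℕ) : t₀ / ((k : ℝ) + 1) ≤ t₀ := by
  apply div_le_self ht₀.le
  have : (0:ℝ) ≤ (k : ℝ) := Nat.cast_nonneg k
  linarith

lemma crit_eq (θ : CPWL m) (zb vb : Ev m) (hzv : vb ∈ θ.subdiff zb) :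
    θ.crit zb vb = Ccone θ zb vb := by
  ext u
  constructor
  · rintro ⟨htan, hlim⟩
    have hd : ∀ j, ⟪θ.d j, zb⟫ = θ.be j → ⟪θ.d j, u⟫ ≤ 0 := tcone_dom_d θ htan
    obtain ⟨i₀, hact, hmax, ta, htapos, hta⟩ := ray θ zb u
    have hev : ∀ᶠ t in 𝓝[>] (0:ℝ),
        (θ.val (zb + t • u) - θ.val zb) / t = ⟪θ.a i₀, u⟫ := by
      filter_upwards [Ioc_mem_nhdsGT htapos] with t ht
      rw [hta t ht.1.le ht.2, add_sub_cancel_left]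
      exact mul_div_cancel_left₀ _ ht.1.ne'
    have h2 : Tendsto (fun t : ℝ => (θ.val (zb + t • u) - θ.val zb) / t) (𝓝[>] 0)
        (𝓝 ⟪θ.a i₀, u⟫) := (tendsto_congr' hev).mpr tendsto_const_nhds
    have huniq : ⟪θ.a i₀, u⟫ = ⟪vb, u⟫ := tendsto_nhds_unique h2 hlim
    exact ⟨hd, fun i hi => le_trans (hmax i hi) (le_of_eq huniq)⟩
  · intro hu
    obtain ⟨t₀, ht₀pos, ht₀⟩ := ray_crit θ zb vb hzv u hu
    constructor
    · refine ⟨fun k => zb + (t₀ / ((k : ℝ) + 1)) • u, fun k => ((k : ℝ) + 1) / t₀,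
        fun k => (ht₀ _ (ratio_pos t₀ ht₀pos k).le (ratio_le t₀ ht₀pos k)).1,
        fun k => by positivity, ?_, ?_⟩
      · have h1 := (ratio_tendsto t₀ ht₀pos).smul_const u
        rw [zero_smul] at h1
        have h2 := Tendsto.add
          (tendsto_const_nhds : Tendsto (fun _ : ℕ => zb) atTop (𝓝 zb)) h1
        rw [add_zero] at h2
        exact h2
      · have heq : (fun k : ℕ => (((k : ℝ) + 1) / t₀) • ((zb + (t₀ / ((k : ℝ) + 1)) • u) - zb))
            = fun _ => u := by
          funext k
          rw [add_sub_cancel_left, smul_smul]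
          have hk : ((k : ℝ) + 1) ≠ 0 := by positivity
          have hne : t₀ * ((k : ℝ) + 1) ≠ 0 := by positivity
          rw [div_mul_div_comm, mul_comm ((k : ℝ) + 1) t₀, div_self hne, one_smul]
        rw [heq]
        exact tendsto_const_nhds
    · have hev : ∀ᶠ t in 𝓝[>] (0:ℝ),
          (θ.val (zb + t • u) - θ.val zb) / t = ⟪vb, u⟫ := by
        filter_upwards [Ioc_mem_nhdsGT ht₀pos] with t ht
        rw [(ht₀ t ht.1.le ht.2).2, add_sub_cancel_left]
        exact mul_div_cancel_left₀ _ ht.1.ne'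
      exact (tendsto_congr' hev).mpr tendsto_const_nhds

end Stmt4Aux
namespace Stmt4Aux

variable {m : ℕ}

/-- Forward inclusion: tangent vectors to `gph ∂θ` lie in `gph N_K`. -/
lemma tcone_gph_sub (θ : CPWL m) (zb vb : Ev m) (hzv : vb ∈ θ.subdiff zb) (u w : Ev m)
    (huw : (u, w) ∈ tcone θ.gph (zb, vb)) :
    u ∈ Ccone θ zb vb ∧ (∀ x ∈ Ccone θ zb vb, ⟪w, x⟫ ≤ 0) ∧ ⟪w, u⟫ = 0 := by
  obtain ⟨q, c, hq, hc, hql, hcl⟩ := huw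
  have hz : Tendsto (fun k => (q k).1) atTop (𝓝 zb) :=
    (continuous_fst.tendsto (zb, vb)).comp hql
  have hu : Tendsto (fun k => c k • ((q k).1 - zb)) atTop (𝓝 u) :=
    (continuous_fst.tendsto (u, w)).comp hcl
  have hw : Tendsto (fun k => c k • ((q k).2 - vb)) atTop (𝓝 w) :=
    (continuous_snd.tendsto (u, w)).comp hcl
  have huk0 : Tendsto (fun k => (q k).1 - zb) atTop (𝓝 0) := by
    have := hz.sub (tendsto_const_nhds (x := zb))
    rwa [sub_self] at this
  have hdomk : ∀ k, (q k).1 ∈ θ.dom := fun k => (hq k).1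
  have key1 : ∀ k, θ.val ((q k).1) - θ.val zb ≤ ⟪(q k).2, (q k).1 - zb⟫ := by
    intro k
    have h1 := (hq k).2 zb hzv.1
    rw [show zb - (q k).1 = -((q k).1 - zb) from (neg_sub _ _).symm, inner_neg_right] at h1
    linarith
  have key2 : ∀ k, ⟪vb, (q k).1 - zb⟫ ≤ θ.val ((q k).1) - θ.val zb :=
    fun k => hzv.2 _ (hdomk k)
  -- (c) in abstract form first, for arbitrary x in the critical cone
  have hpolar : ∀ x ∈ Ccone θ zb vb, ⟪w, x⟫ ≤ 0 := by
    intro x hx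
    obtain ⟨t₀, ht₀pos, ht₀⟩ := ray_crit θ zb vb hzv x hx
    obtain ⟨hdomx, hvalx⟩ := ht₀ t₀ ht₀pos.le le_rfl
    have hstep : ∀ k, t₀ * ⟪c k • ((q k).2 - vb), x⟫ ≤ ⟪c k • ((q k).2 - vb), (q k).1 - zb⟫ := by
      intro k
      have h1 := (hq k).2 _ hdomx
      have heq : zb + t₀ • x - (q k).1 = t₀ • x - ((q k).1 - zb) := by abel
      rw [heq, inner_sub_right, real_inner_smul_right, hvalx] at h1
      -- h1 : t₀ * ⟪vk, x⟫ - ⟪vk, uk⟫ ≤ θ.val zb + t₀ * ⟪vb, x⟫ - θ.val (q k).1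
      have h2 := key2 k
      rw [real_inner_smul_left, real_inner_smul_left, inner_sub_left, inner_sub_left]
      have h3 : t₀ * (⟪(q k).2, x⟫ - ⟪vb, x⟫) ≤ ⟪(q k).2, (q k).1 - zb⟫ - ⟪vb, (q k).1 - zb⟫ := by
        linarith
      nlinarith [hc k]
    have hL : Tendsto (fun k => t₀ * ⟪c k • ((q k).2 - vb), x⟫) atTop (𝓝 (t₀ * ⟪w, x⟫)) :=
      (Filter.Tendsto.inner (𝕜 := ℝ) hw (tendsto_const_nhds : Tendsto (fun _ : ℕ => x) atTop (𝓝 x))).const_mul t₀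
    have hR : Tendsto (fun k => ⟪c k • ((q k).2 - vb), (q k).1 - zb⟫) atTop (𝓝 (0:ℝ)) := by
      have h5 : Tendsto (fun k => ⟪c k • ((q k).2 - vb), (q k).1 - zb⟫) atTop
          (𝓝 (⟪w, (0 : Ev m)⟫)) := hw.inner huk0
      rwa [inner_zero_right] at h5
    have := le_of_tendsto_of_tendsto' hL hR hstep
    nlinarith
  have hmemC : u ∈ Ccone θ zb vb := by
    constructor
    · intro j hj
      have hlim : Tendsto (fun k => ⟪θ.d j, c k • ((q k).1 - zb)⟫) atTop (𝓝 ⟪θ.d j, u⟫) :=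
        tendsto_const_nhds.inner hu
      refine le_of_tendsto hlim (Eventually.of_forall fun k => ?_)
      rw [real_inner_smul_right, inner_sub_right]
      have h1 : ⟪θ.d j, (q k).1⟫ - ⟪θ.d j, zb⟫ ≤ 0 := by rw [hj]; linarith [hdomk k j]
      nlinarith [hc k]
    · intro i hi
      have hstep : ∀ k, ⟪θ.a i, c k • ((q k).1 - zb)⟫ - ⟪vb, c k • ((q k).1 - zb)⟫
          ≤ ⟪c k • ((q k).2 - vb), (q k).1 - zb⟫ := by
        intro k
        have h1 : ⟪θ.a i, (q k).1 - zb⟫ ≤ θ.val ((q k).1) - θ.val zb := by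
          rw [inner_sub_right]
          have := le_val θ ((q k).1) i
          linarith [hi]
        have h2 := key1 k
        have h3 := key2 k
        rw [real_inner_smul_right, real_inner_smul_right, real_inner_smul_left,
          inner_sub_left]
        nlinarith [hc k]
      have hL : Tendsto (fun k => ⟪θ.a i, c k • ((q k).1 - zb)⟫ - ⟪vb, c k • ((q k).1 - zb)⟫)
          atTop (𝓝 (⟪θ.a i, u⟫ - ⟪vb, u⟫)) :=
        (tendsto_const_nhds.inner hu).sub (tendsto_const_nhds.inner hu)
      have hR : Tendsto (fun k => ⟪c k • ((q k).2 - vb), (q k).1 - zb⟫) atTop (𝓝 (0:ℝ)) := by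
        have h5 : Tendsto (fun k => ⟪c k • ((q k).2 - vb), (q k).1 - zb⟫) atTop
            (𝓝 (⟪w, (0 : Ev m)⟫)) := hw.inner huk0
        rwa [inner_zero_right] at h5
      have := le_of_tendsto_of_tendsto' hL hR hstep
      linarith
  refine ⟨hmemC, hpolar, le_antisymm (hpolar u hmemC) ?_⟩
  have hstep : ∀ k, (0:ℝ) ≤ ⟪c k • ((q k).2 - vb), c k • ((q k).1 - zb)⟫ := by
    intro k
    have h2 := key1 k
    have h3 := key2 k
    rw [real_inner_smul_left, real_inner_smul_right, inner_sub_left]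
    have h4 := mul_nonneg (mul_nonneg (hc k) (hc k)) (sub_nonneg.mpr (h3.trans h2))
    nlinarith [h4]
  exact le_of_tendsto_of_tendsto' (tendsto_const_nhds : Tendsto (fun _ : ℕ => (0:ℝ)) atTop (𝓝 0)) (hw.inner hu) hstep

end Stmt4Aux
namespace Stmt4Aux

variable {m : ℕ}

/-- Reverse inclusion: `gph N_K ⊆ tcone (gph ∂θ)`. -/
lemma sub_tcone (θ : CPWL m) (zb vb : Ev m) (hzv : vb ∈ θ.subdiff zb) (u w : Ev m)
    (hu : u ∈ Ccone θ zb vb) (hwP : ∀ x ∈ Ccone θ zb vb, ⟪w, x⟫ ≤ 0) (hwu : ⟪w, u⟫ = 0) :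
    (u, w) ∈ tcone θ.gph (zb, vb) := by
  classical
  set S : Finset (Ev m) :=
    ((Finset.univ.filter (fun j => ⟪θ.d j, zb⟫ = θ.be j)).image θ.d) ∪
    ((Finset.univ.filter (fun i => θ.val zb = ⟪θ.a i, zb⟫ - θ.al i)).image
      (fun i => θ.a i - vb)) with hS
  have hSmem : ∀ g ∈ S, (∃ j, ⟪θ.d j, zb⟫ = θ.be j ∧ g = θ.d j) ∨
      (∃ i, θ.val zb = ⟪θ.a i, zb⟫ - θ.al i ∧ g = θ.a i - vb) := by
    intro g hg
    rw [hS, Finset.mem_union] at hg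
    rcases hg with hg | hg
    · obtain ⟨j, hj, rfl⟩ := Finset.mem_image.mp hg
      exact Or.inl ⟨j, (Finset.mem_filter.mp hj).2, rfl⟩
    · obtain ⟨i, hi, rfl⟩ := Finset.mem_image.mp hg
      exact Or.inr ⟨i, (Finset.mem_filter.mp hi).2, rfl⟩
  have hwS : w ∈ fcone S := by
    apply farkas
    intro x hx
    apply hwP
    constructor
    · intro j hj
      apply hx
      rw [hS, Finset.mem_union]
      exact Or.inl (Finset.mem_image.mpr
        ⟨j, Finset.mem_filter.mpr ⟨Finset.mem_univ j, hj⟩, rfl⟩)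
    · intro i hi
      have h1 := hx (θ.a i - vb) (by
        rw [hS, Finset.mem_union]
        exact Or.inr (Finset.mem_image.mpr
          ⟨i, Finset.mem_filter.mpr ⟨Finset.mem_univ i, hi⟩, rfl⟩))
      rw [inner_sub_left] at h1
      linarith
  obtain ⟨lam, hlam, hwrep⟩ := hwS
  set γ : ℝ := ∑ g ∈ S, lam g with hγ
  have hγnn : 0 ≤ γ := Finset.sum_nonneg fun g _ => hlam g
  have hkey : ∀ z' ∈ θ.dom, ⟪w, z' - zb⟫ ≤ γ * (θ.val z' - θ.val zb - ⟪vb, z' - zb⟫) := by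
    intro z' hz'
    have hgb : ∀ g ∈ S, ⟪g, z' - zb⟫ ≤ θ.val z' - θ.val zb - ⟪vb, z' - zb⟫ := by
      intro g hg
      have hR : 0 ≤ θ.val z' - θ.val zb - ⟪vb, z' - zb⟫ := by
        have := hzv.2 z' hz'; linarith
      rcases hSmem g hg with ⟨j, hj, rfl⟩ | ⟨i, hi, rfl⟩
      · have h1 : ⟪θ.d j, z'⟫ ≤ θ.be j := hz' j
        rw [inner_sub_right, hj]
        linarith
      · rw [inner_sub_left, inner_sub_right, inner_sub_right]
        have h1 := le_val θ z' i
        linarith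
    rw [hwrep, sum_inner]
    calc ∑ g ∈ S, ⟪lam g • g, z' - zb⟫
        = ∑ g ∈ S, lam g * ⟪g, z' - zb⟫ :=
          Finset.sum_congr rfl fun g _ => real_inner_smul_left _ _ _
      _ ≤ ∑ g ∈ S, lam g * (θ.val z' - θ.val zb - ⟪vb, z' - zb⟫) :=
          Finset.sum_le_sum fun g hg => mul_le_mul_of_nonneg_left (hgb g hg) (hlam g)
      _ = γ * (θ.val z' - θ.val zb - ⟪vb, z' - zb⟫) := by
          rw [hγ, Finset.sum_mul]
  obtain ⟨t₀, ht₀pos, ht₀⟩ := ray_crit θ zb vb hzv u hu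
  set t₁ : ℝ := min t₀ (1 / (γ + 1)) with ht₁
  have ht₁pos : 0 < t₁ := lt_min ht₀pos (by positivity)
  have hmem : ∀ t : ℝ, 0 ≤ t → t ≤ t₁ → (vb + t • w) ∈ θ.subdiff (zb + t • u) := by
    intro t ht0 htle
    have h1 := ht₀ t ht0 (le_trans htle (min_le_left _ _))
    refine ⟨h1.1, fun z' hz' => ?_⟩
    have h2 := hkey z' hz'
    have hexp : ⟪vb + t • w, z' - (zb + t • u)⟫
        = ⟪vb, z' - zb⟫ - t * ⟪vb, u⟫ + t * ⟪w, z' - zb⟫ - t * (t * ⟪w, u⟫) := by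
      have heq : z' - (zb + t • u) = (z' - zb) - t • u := by abel
      rw [heq]
      simp only [inner_add_left, inner_sub_right, real_inner_smul_left, real_inner_smul_right]
      ring
    rw [hexp, h1.2, hwu]
    have htγ : t * γ ≤ 1 := by
      calc t * γ ≤ (1 / (γ + 1)) * γ :=
            mul_le_mul_of_nonneg_right (le_trans htle (min_le_right _ _)) hγnn
        _ ≤ 1 := by
            rw [div_mul_eq_mul_div, div_le_one (by positivity)]
            linarith
    have hR : 0 ≤ θ.val z' - θ.val zb - ⟪vb, z' - zb⟫ := by
      have := hzv.2 z' hz'; linarith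
    have h3 : t * ⟪w, z' - zb⟫ ≤ t * (γ * (θ.val z' - θ.val zb - ⟪vb, z' - zb⟫)) :=
      mul_le_mul_of_nonneg_left h2 ht0
    nlinarith [mul_le_mul_of_nonneg_right htγ hR]
  refine ⟨fun k => (zb + (t₁ / ((k:ℝ)+1)) • u, vb + (t₁ / ((k:ℝ)+1)) • w),
    fun k => ((k:ℝ)+1) / t₁,
    fun k => hmem _ (ratio_pos t₁ ht₁pos k).le (ratio_le t₁ ht₁pos k),
    fun k => by positivity, ?_, ?_⟩
  · apply Tendsto.prodMk_nhds
    · have h1 := (ratio_tendsto t₁ ht₁pos).smul_const u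
      rw [zero_smul] at h1
      have h2 := Tendsto.add (tendsto_const_nhds : Tendsto (fun _ : ℕ => zb) atTop (𝓝 zb)) h1
      rwa [add_zero] at h2
    · have h1 := (ratio_tendsto t₁ ht₁pos).smul_const w
      rw [zero_smul] at h1
      have h2 := Tendsto.add (tendsto_const_nhds : Tendsto (fun _ : ℕ => vb) atTop (𝓝 vb)) h1
      rwa [add_zero] at h2
  · have heq : (fun k : ℕ => (((k:ℝ)+1)/t₁) •
        ((zb + (t₁/((k:ℝ)+1)) • u, vb + (t₁/((k:ℝ)+1)) • w) - (zb, vb)))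
        = fun _ : ℕ => (u, w) := by
      funext k
      have hne : t₁ * ((k : ℝ) + 1) ≠ 0 := by positivity
      have hfst : (((k:ℝ)+1)/t₁) • ((zb + (t₁/((k:ℝ)+1)) • u) - zb) = u := by
        rw [add_sub_cancel_left, smul_smul, div_mul_div_comm,
          mul_comm ((k:ℝ)+1) t₁, div_self hne, one_smul]
      have hsnd : (((k:ℝ)+1)/t₁) • ((vb + (t₁/((k:ℝ)+1)) • w) - vb) = w := by
        rw [add_sub_cancel_left, smul_smul, div_mul_div_comm,
          mul_comm ((k:ℝ)+1) t₁, div_self hne, one_smul]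
      exact Prod.ext_iff.mpr ⟨hfst, hsnd⟩
    rw [heq]
    exact tendsto_const_nhds

end Stmt4Aux

/-- the graphical derivative as the minimizing subset of the regular coderivative. -/
theorem stmt4 {m : ℕ} (θ : CPWL m) (zb vb : Ev m) (hzv : vb ∈ θ.subdiff zb) :
    ∀ u ∈ θ.crit zb vb,
      θ.Dsub zb vb u = {w : Ev m | w ∈ θ.Dhat zb vb (-u) ∧ ⟪w, u⟫ = 0} ∧
      θ.Dsub zb vb u =
        {w : Ev m | w ∈ θ.Dhat zb vb (-u) ∧
          ∀ w' ∈ θ.Dhat zb vb (-u), -⟪w, u⟫ ≤ -⟪w', u⟫} := by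
  intro u hucrit
  have hC := Stmt4Aux.crit_eq θ zb vb hzv
  have huC : u ∈ Stmt4Aux.Ccone θ zb vb := hC ▸ hucrit
  have hmemDhat : ∀ w : Ev m, w ∈ θ.Dhat zb vb (-u) ↔
      (∀ x ∈ Stmt4Aux.Ccone θ zb vb, ⟪w, x⟫ ≤ 0) := by
    intro w
    constructor
    · intro hw x hx
      have h0 : ((x, (0 : Ev m)) : Ev m × Ev m) ∈ tcone θ.gph (zb, vb) :=
        Stmt4Aux.sub_tcone θ zb vb hzv x 0 hx (fun y _ => by simp) (by simp)
      have h1 := hw (x, 0) h0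
      simpa using h1
    · intro hw h hh
      obtain ⟨h1C, h2pol, -⟩ := Stmt4Aux.tcone_gph_sub θ zb vb hzv h.1 h.2 (by simpa using hh)
      have h3 : ⟪w, h.1⟫ ≤ 0 := hw h.1 h1C
      have h4 : ⟪h.2, u⟫ ≤ 0 := h2pol u huC
      have h5 : ⟪u, h.2⟫ ≤ 0 := by rw [real_inner_comm]; exact h4
      rw [inner_neg_left]
      linarith
  have hmemDsub : ∀ w : Ev m, w ∈ θ.Dsub zb vb u ↔
      ((∀ x ∈ Stmt4Aux.Ccone θ zb vb, ⟪w, x⟫ ≤ 0) ∧ ⟪w, u⟫ = 0) := by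
    intro w
    constructor
    · intro hw
      obtain ⟨-, h2, h3⟩ := Stmt4Aux.tcone_gph_sub θ zb vb hzv u w hw
      exact ⟨h2, h3⟩
    · rintro ⟨h1, h2⟩
      exact Stmt4Aux.sub_tcone θ zb vb hzv u w huC h1 h2
  constructor
  · ext w
    simp only [Set.mem_setOf_eq, hmemDsub, hmemDhat]
  · ext w
    simp only [Set.mem_setOf_eq, hmemDsub, hmemDhat]
    constructor
    · rintro ⟨hpol, hequ⟩
      refine ⟨hpol, fun w' hw' => ?_⟩
      have h1 : ⟪w', u⟫ ≤ 0 := hw' u huC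
      rw [hequ]
      linarith
    · rintro ⟨hpol, hmin⟩
      refine ⟨hpol, ?_⟩
      have h0 := hmin 0 (fun x _ => by simp)
      have h1 : ⟪w, u⟫ ≤ 0 := hpol u huC
      simp only [inner_zero_left, neg_zero] at h0
      linarith
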